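/- Let Σ be a closed J-holomorphic curve in S⁶. The Dirac operator 𝐃_Σ is J-antilinear: 𝐃_Σ(Jν) = −J 𝐃_Σ ν for all ν ∈ C^∞(NΣ). Consequently, for the homogeneous kernel spaces V_λ = {r^{λ−1}ν_Σ : 𝐃_Σν_Σ = −(λ+1)Jν_Σ} of the cone C over Σ, the symmetry J V_{−1+λ} = V_{−1−λ} holds, and in particular d_{−1+λ} = d_{−1−λ} where d_μ = dim V_μ. -/

import Mathlib

open scoped RealInnerProductSpace

noncomputable section

/-- ℝ⁷ with its Euclidean inner product. -/
abbrev E7 : Type := EuclideanSpace ℝ (Fin 7)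

/-- (e^i ∧ e^j ∧ e^k)(x, y, z). -/
def tripleDet (i j k : Fin 7) (x y z : E7) : ℝ :=
  Matrix.det !![x i, y i, z i; x j, y j, z j; x k, y k, z k]

/-- The standard G₂ 3-form
φₑ = e^{123} − e^{145} − e^{167} − e^{246} − e^{275} − e^{347} − e^{356}
(indices shifted to start from 0). -/
def phiE (x y z : E7) : ℝ :=
  tripleDet 0 1 2 x y z - tripleDet 0 3 4 x y z - tripleDet 0 5 6 x y z -
    tripleDet 1 3 5 x y z - tripleDet 1 6 4 x y z - tripleDet 2 3 6 x y z -
    tripleDet 2 4 5 x y z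

/-- The octonionic cross product on ℝ⁷ = Im 𝕆, characterized by ⟨u × v, w⟩ = φₑ(u,v,w). -/
def cross7 (u v : E7) : E7 :=
  (EuclideanSpace.equiv (Fin 7) ℝ).symm fun k => phiE u v (EuclideanSpace.single k 1)

/-- Tangential projection onto T_x S⁶ (for ‖x‖ = 1): w ↦ w − ⟨x,w⟩x. -/
def tproj (x w : E7) : E7 := w - ⟪x, w⟫ • x

/-- Chart domain for a local parametrization of a surface Σ ⊂ S⁶. -/
abbrev Pt : Type := ℝ × ℝ

/-- The standard complex structure j₀ of the chart ℝ². -/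
def j0 (c : Pt) : Pt := (-c.2, c.1)

/-- The span of the position vector and the tangent plane of the parametrized surface
F : ℝ² → Σ ⊂ S⁶ at F(p). -/
def TanSpan (F : Pt → E7) (p : Pt) : Submodule ℝ E7 :=
  Submodule.span ℝ {F p, fderiv ℝ F p (1, 0), fderiv ℝ F p (0, 1)}

/-- The normal space N_{F(p)}Σ of Σ in S⁶. -/
def Nsp (F : Pt → E7) (p : Pt) : Submodule ℝ E7 := (TanSpan F p)ᗮ

/-- Orthogonal projection onto the normal space of Σ in S⁶. -/
def PN (F : Pt → E7) (p : Pt) (w : E7) : E7 := (Submodule.orthogonalProjectionOnto (Nsp F p) w : E7)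

/-- The normal connection ∇^⊥ (induced by the Levi–Civita connection of the round S⁶) on normal
vector fields ξ along Σ, in the chart direction c. -/
def covN (F ξ : Pt → E7) (p : Pt) (c : Pt) : E7 := PN F p (fderiv ℝ ξ p c)

/-- The normal part ∇̃^⊥ of the characteristic SU(3) connection
∇̃_u ξ = ∇_u ξ + ½ (∇_u J)(Jξ), in the chart direction c;
here (∇_u J)v = u ×_{S⁶} v on S⁶. -/
def covT (F ξ : Pt → E7) (p : Pt) (c : Pt) : E7 :=
  PN F p (fderiv ℝ ξ p c + (2 : ℝ)⁻¹ • cross7 (fderiv ℝ F p c) (cross7 (F p) (ξ p)))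

/-- The Dirac operator 𝐃_Σ = Σᵢ fᵢ × ∇̃^⊥_{fᵢ} of the link, in a conformal chart
(fᵢ = ∂ᵢF/ρ with ρ = ‖∂₁F‖ = ‖∂₂F‖). -/
def DSigC (F ξ : Pt → E7) (p : Pt) : E7 :=
  (‖fderiv ℝ F p (1, 0)‖ ^ 2)⁻¹ •
    (cross7 (fderiv ℝ F p (1, 0)) (covT F ξ p (1, 0)) +
      cross7 (fderiv ℝ F p (0, 1)) (covT F ξ p (0, 1)))

/-- The homogeneous kernel V_λ of the cone over Σ, identified with the (λ+1)-eigenspace of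
J𝐃_Σ, i.e. {ν : 𝐃_Σ ν = −(λ+1) Jν}. -/
def Vset (F : Pt → E7) (l : ℝ) : Set (Pt → E7) :=
  {ν | ContDiff ℝ (⊤ : ℕ∞) ν ∧ (∀ p, ν p ∈ Nsp F p) ∧
    ∀ p, DSigC F ν p = (-(l + 1)) • cross7 (F p) (ν p)}

/-! ### Componentwise description of the cross product -/

lemma cross7_apply' (u v : E7) (k : Fin 7) :
    cross7 u v k = phiE u v (EuclideanSpace.single k 1) := rfl

lemma cross7_0 (u v : E7) : cross7 u v 0 =
    (u 1*v 2 - u 2*v 1) - (u 3*v 4 - u 4*v 3) - (u 5*v 6 - u 6*v 5) := by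
  simp [cross7_apply', phiE, tripleDet, Matrix.det_fin_three, EuclideanSpace.single_apply,
    Matrix.vecHead, Matrix.vecTail]; ring
lemma cross7_1 (u v : E7) : cross7 u v 1 =
    (u 2*v 0 - u 0*v 2) - (u 3*v 5 - u 5*v 3) - (u 6*v 4 - u 4*v 6) := by
  simp [cross7_apply', phiE, tripleDet, Matrix.det_fin_three, EuclideanSpace.single_apply,
    Matrix.vecHead, Matrix.vecTail]; ring
lemma cross7_2 (u v : E7) : cross7 u v 2 =
    (u 0*v 1 - u 1*v 0) - (u 3*v 6 - u 6*v 3) - (u 4*v 5 - u 5*v 4) := by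
  simp [cross7_apply', phiE, tripleDet, Matrix.det_fin_three, EuclideanSpace.single_apply,
    Matrix.vecHead, Matrix.vecTail]; ring
lemma cross7_3 (u v : E7) : cross7 u v 3 =
    -(u 4*v 0 - u 0*v 4) - (u 5*v 1 - u 1*v 5) - (u 6*v 2 - u 2*v 6) := by
  simp [cross7_apply', phiE, tripleDet, Matrix.det_fin_three, EuclideanSpace.single_apply,
    Matrix.vecHead, Matrix.vecTail]; ring
lemma cross7_4 (u v : E7) : cross7 u v 4 =
    -(u 0*v 3 - u 3*v 0) - (u 1*v 6 - u 6*v 1) - (u 5*v 2 - u 2*v 5) := by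
  simp [cross7_apply', phiE, tripleDet, Matrix.det_fin_three, EuclideanSpace.single_apply,
    Matrix.vecHead, Matrix.vecTail]; ring
lemma cross7_5 (u v : E7) : cross7 u v 5 =
    -(u 6*v 0 - u 0*v 6) - (u 1*v 3 - u 3*v 1) - (u 2*v 4 - u 4*v 2) := by
  simp [cross7_apply', phiE, tripleDet, Matrix.det_fin_three, EuclideanSpace.single_apply,
    Matrix.vecHead, Matrix.vecTail]; ring
lemma cross7_6 (u v : E7) : cross7 u v 6 =
    -(u 0*v 5 - u 5*v 0) - (u 4*v 1 - u 1*v 4) - (u 2*v 3 - u 3*v 2) := by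
  simp [cross7_apply', phiE, tripleDet, Matrix.det_fin_three, EuclideanSpace.single_apply,
    Matrix.vecHead, Matrix.vecTail]; ring

lemma inner7 (u v : E7) : ⟪u, v⟫ =
    u 0*v 0 + u 1*v 1 + u 2*v 2 + u 3*v 3 + u 4*v 4 + u 5*v 5 + u 6*v 6 := by
  simp [PiLp.inner_apply, Fin.sum_univ_seven, RCLike.inner_apply]; ring

section CrossAlgebra
attribute [local simp] cross7_0 cross7_1 cross7_2 cross7_3 cross7_4 cross7_5 cross7_6

/-- The fundamental identity of the octonionic cross product. -/
lemma cross7_key (u v w : E7) :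
    cross7 u (cross7 v w) + cross7 v (cross7 u w)
      = (-(2*⟪u,v⟫)) • w + ⟪u,w⟫ • v + ⟪v,w⟫ • u := by
  ext k
  fin_cases k <;>
    simp [inner7, Fin.sum_univ_seven, PiLp.add_apply, PiLp.smul_apply, smul_eq_mul] <;> ring

lemma cross7_self (u : E7) : cross7 u u = 0 := by
  ext k; fin_cases k <;> simp <;> ring

lemma inner_cross7_right (u v w : E7) : ⟪w, cross7 u v⟫ = -⟪v, cross7 u w⟫ := by
  simp [inner7, Fin.sum_univ_seven]; ring

lemma cross7_add_left (u u' v : E7) :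
    cross7 (u + u') v = cross7 u v + cross7 u' v := by
  ext k; fin_cases k <;> simp [PiLp.add_apply] <;> ring

lemma cross7_add_right (u v v' : E7) :
    cross7 u (v + v') = cross7 u v + cross7 u v' := by
  ext k; fin_cases k <;> simp [PiLp.add_apply] <;> ring

lemma cross7_smul_left (r : ℝ) (u v : E7) :
    cross7 (r • u) v = r • cross7 u v := by
  ext k; fin_cases k <;> simp [PiLp.smul_apply, smul_eq_mul] <;> ring

lemma cross7_smul_right (r : ℝ) (u v : E7) :
    cross7 u (r • v) = r • cross7 u v := by
  ext k; fin_cases k <;> simp [PiLp.smul_apply, smul_eq_mul] <;> ring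

lemma cross7_neg_right (u v : E7) : cross7 u (-v) = - cross7 u v := by
  ext k; fin_cases k <;> simp [PiLp.neg_apply] <;> ring

end CrossAlgebra

/-- The cross product as a continuous bilinear map. -/
def cross7CLM : E7 →L[ℝ] E7 →L[ℝ] E7 :=
  LinearMap.toContinuousLinearMap
    { toFun := fun u => LinearMap.toContinuousLinearMap
        { toFun := fun v => cross7 u v
          map_add' := fun v v' => cross7_add_right u v v'
          map_smul' := fun r v => cross7_smul_right r u v }
      map_add' := by
        intro u u'; ext v; simp [cross7_add_left]
      map_smul' := by
        intro r u; ext v; simp [cross7_smul_left] }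

lemma cross7CLM_apply (u v : E7) : cross7CLM u v = cross7 u v := rfl

lemma contDiff_cross7_comp {f g : Pt → E7} (hf : ContDiff ℝ (⊤ : ℕ∞) f)
    (hg : ContDiff ℝ (⊤ : ℕ∞) g) :
    ContDiff ℝ (⊤ : ℕ∞) fun q => cross7 (f q) (g q) := by
  have h := (cross7CLM.isBoundedBilinearMap.contDiff (n := (⊤ : ℕ∞))).comp (hf.prodMk hg)
  exact h

lemma fderiv_cross7_comp {f g : Pt → E7} {p : Pt} (hf : DifferentiableAt ℝ f p)
    (hg : DifferentiableAt ℝ g p) (c : Pt) :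
    fderiv ℝ (fun q => cross7 (f q) (g q)) p c
      = cross7 (fderiv ℝ f p c) (g p) + cross7 (f p) (fderiv ℝ g p c) := by
  have h := (cross7CLM.hasFDerivAt_of_bilinear hf.hasFDerivAt hg.hasFDerivAt).fderiv
  rw [show (fun q => cross7 (f q) (g q)) = fun q => cross7CLM (f q) (g q) from rfl, h]
  simp [ContinuousLinearMap.precompR, ContinuousLinearMap.precompL, cross7CLM_apply]
  abel

/-! ### Geometry of the tangent and normal spaces -/

lemma cross7_zero_right (u : E7) : cross7 u 0 = 0 := by
  have := cross7_smul_right (0 : ℝ) u 0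
  simpa using this

section Geometry

variable (F : Pt → E7) (p : Pt)

lemma memT_x : F p ∈ TanSpan F p :=
  Submodule.subset_span (by left; rfl)

lemma memT_u1 : fderiv ℝ F p (1, 0) ∈ TanSpan F p :=
  Submodule.subset_span (by right; left; rfl)

lemma memT_u2 : fderiv ℝ F p (0, 1) ∈ TanSpan F p :=
  Submodule.subset_span (by right; right; rfl)

lemma inner_T_N {w t : E7} (hw : w ∈ Nsp F p) (ht : t ∈ TanSpan F p) : ⟪t, w⟫ = 0 :=
  ((Submodule.mem_orthogonal _ _).1 hw) t ht

end Geometry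

section WithHolo

variable {F : Pt → E7} {p : Pt}

lemma J_tan (hholo : ∀ p c, fderiv ℝ F p (j0 c) = cross7 (F p) (fderiv ℝ F p c))
    {w : E7} (hw : w ∈ TanSpan F p) : cross7 (F p) w ∈ TanSpan F p := by
  induction hw using Submodule.span_induction with
  | mem z hz =>
    rcases hz with h | h | h
    · rw [h, cross7_self]; exact Submodule.zero_mem _
    · have h2 := hholo p (1, 0)
      have hj : (j0 ((1 : ℝ), (0 : ℝ)) : Pt) = ((0 : ℝ), (1 : ℝ)) := by
        simp [j0, Prod.ext_iff]
      rw [hj] at h2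
      rw [h, ← h2]
      exact memT_u2 F p
    · have h2 := hholo p (0, 1)
      have hj : (j0 ((0 : ℝ), (1 : ℝ)) : Pt) = -((1 : ℝ), (0 : ℝ)) := by
        simp [j0, Prod.ext_iff]
      rw [hj, map_neg] at h2
      rw [h, ← h2]
      exact Submodule.neg_mem _ (memT_u1 F p)
  | zero => rw [cross7_zero_right]; exact Submodule.zero_mem _
  | add y z _ _ hy hz => rw [cross7_add_right]; exact Submodule.add_mem _ hy hz
  | smul r y _ hy => rw [cross7_smul_right]; exact Submodule.smul_mem _ _ hy

lemma J_norm (hholo : ∀ p c, fderiv ℝ F p (j0 c) = cross7 (F p) (fderiv ℝ F p c))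
    {w : E7} (hw : w ∈ Nsp F p) : cross7 (F p) w ∈ Nsp F p := by
  rw [Nsp, Submodule.mem_orthogonal]
  intro t ht
  rw [inner_cross7_right]
  have h0 := inner_T_N F p hw (J_tan hholo ht)
  rw [real_inner_comm] at h0
  rw [h0, neg_zero]

lemma PN_of_memN {w : E7} (hw : w ∈ Nsp F p) : PN F p w = w := by
  rw [PN]
  exact congrArg _ (Submodule.orthogonalProjectionOnto_mem_subspace_eq_self (⟨w, hw⟩ : Nsp F p))

lemma PN_of_memT {w : E7} (hw : w ∈ TanSpan F p) : PN F p w = 0 := by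
  rw [PN]
  have : w ∈ (Nsp F p)ᗮ := (Submodule.le_orthogonal_orthogonal _) hw
  rw [Submodule.orthogonalProjectionOnto_apply_of_mem_orthogonal this]
  rfl

lemma PN_mem (w : E7) : PN F p w ∈ Nsp F p := (Submodule.orthogonalProjectionOnto (Nsp F p) w).2

lemma PN_add (w w' : E7) : PN F p (w + w') = PN F p w + PN F p w' := by
  simp [PN, map_add]

lemma PN_smul (r : ℝ) (w : E7) : PN F p (r • w) = r • PN F p w := by
  simp [PN, map_smul]

lemma PN_neg (w : E7) : PN F p (-w) = - PN F p w := by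
  simp [PN, map_neg]

lemma PN_decomp (w : E7) :
    ∃ t ∈ TanSpan F p, w = t + PN F p w := by
  refine ⟨Submodule.orthogonalProjectionOnto (TanSpan F p) w, (Submodule.orthogonalProjectionOnto (TanSpan F p) w).2, ?_⟩
  exact (Submodule.starProjection_add_starProjection_orthogonal (K := TanSpan F p) w).symm

lemma PN_J (hholo : ∀ p c, fderiv ℝ F p (j0 c) = cross7 (F p) (fderiv ℝ F p c))
    (w : E7) : PN F p (cross7 (F p) w) = cross7 (F p) (PN F p w) := by
  obtain ⟨t, ht, hw⟩ := PN_decomp (F := F) (p := p) w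
  conv_lhs => rw [hw]
  rw [cross7_add_right, PN_add, PN_of_memT (J_tan hholo ht),
    PN_of_memN (J_norm hholo (PN_mem w)), zero_add]

end WithHolo

/-! ### Pointwise identities -/

lemma inner_self_of_unit {x : E7} (h : ‖x‖ = 1) : ⟪x, x⟫ = 1 := by
  rw [real_inner_self_eq_norm_sq, h, one_pow]

lemma double_cross {x n : E7} (hx : ⟪x, x⟫ = 1) (hxn : ⟪x, n⟫ = 0) :
    cross7 x (cross7 x n) = -n := by
  have h := cross7_key x x n
  rw [hx, hxn] at h
  have h2 : (2 : ℝ) • cross7 x (cross7 x n) = (2 : ℝ) • (-n) := by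
    rw [two_smul, h]
    module
  exact smul_right_injective _ (by norm_num) h2

lemma triple_cross {x u n : E7} (hxu : ⟪x, u⟫ = 0) (hxn : ⟪x, n⟫ = 0) (hun : ⟪u, n⟫ = 0) :
    cross7 u (cross7 x n) = - cross7 x (cross7 u n) := by
  have hux : ⟪u, x⟫ = 0 := by rw [real_inner_comm]; exact hxu
  have h := cross7_key u x n
  rw [hux, hun, hxn] at h
  have h0 : cross7 u (cross7 x n) + cross7 x (cross7 u n) = 0 := by
    rw [h]; module
  linear_combination (norm := module) h0

/-- The purely algebraic heart of the computation `∇̃^⊥(Jν) = J ∇̃^⊥ν`. -/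
lemma covT_J_alg {x uc n dn : E7} (hxx : ⟪x, x⟫ = 1) (hxn : ⟪x, n⟫ = 0)
    (hxuc : ⟪x, uc⟫ = 0) :
    cross7 x (dn + (2 : ℝ)⁻¹ • cross7 uc (cross7 x n))
      = (cross7 uc n + cross7 x dn
          + (2 : ℝ)⁻¹ • cross7 uc (cross7 x (cross7 x n)))
        + ((2 : ℝ)⁻¹ * ⟪uc, cross7 x n⟫) • x := by
  have hdd : cross7 x (cross7 x n) = -n := double_cross hxx hxn
  have hkey := cross7_key x uc (cross7 x n)
  have e1 : ⟪x, cross7 x n⟫ = 0 := by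
    rw [inner_cross7_right, cross7_self]
    simp
  rw [hxuc, e1, hdd, cross7_neg_right] at hkey
  rw [hdd, cross7_neg_right, cross7_add_right, cross7_smul_right]
  linear_combination (norm := module) ((2 : ℝ)⁻¹) • hkey

lemma inner_F_fderiv {F : Pt → E7} (hF : ContDiff ℝ (⊤ : ℕ∞) F)
    (hunit : ∀ p, ‖F p‖ = 1) (p c : Pt) : ⟪F p, fderiv ℝ F p c⟫ = 0 := by
  have hd := ((hF.differentiable (by simp)) p).hasFDerivAt
  have h1 := hd.inner ℝ hd
  have h2 : (fun q : Pt => (⟪F q, F q⟫ : ℝ)) = fun _ => (1 : ℝ) :=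
    funext fun q => inner_self_of_unit (hunit q)
  rw [h2] at h1
  have h3 := h1.unique (hasFDerivAt_const (1 : ℝ) p)
  have h4 := congrFun (congrArg DFunLike.coe h3) c
  simp only [ContinuousLinearMap.comp_apply, ContinuousLinearMap.prod_apply,
    fderivInnerCLM_apply, ContinuousLinearMap.zero_apply] at h4
  rw [real_inner_comm (F p)] at h4
  linarith

lemma inner_fderiv_F {F : Pt → E7} (hF : ContDiff ℝ (⊤ : ℕ∞) F)
    (hunit : ∀ p, ‖F p‖ = 1) (p c : Pt) : ⟪fderiv ℝ F p c, F p⟫ = 0 := by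
  rw [real_inner_comm]; exact inner_F_fderiv hF hunit p c

/-! ### J-antilinearity of the Dirac operator -/

section Dirac

variable {F ν : Pt → E7}

lemma covT_J (hF : ContDiff ℝ (⊤ : ℕ∞) F) (hunit : ∀ p, ‖F p‖ = 1)
    (hholo : ∀ p c, fderiv ℝ F p (j0 c) = cross7 (F p) (fderiv ℝ F p c))
    (hν : ContDiff ℝ (⊤ : ℕ∞) ν) (hNν : ∀ p, ν p ∈ Nsp F p) (p c : Pt) :
    covT F (fun q => cross7 (F q) (ν q)) p c = cross7 (F p) (covT F ν p c) := by
  have hdF : DifferentiableAt ℝ F p := (hF.differentiable (by simp)) p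
  have hdν : DifferentiableAt ℝ ν p := (hν.differentiable (by simp)) p
  have hxx : ⟪F p, F p⟫ = 1 := inner_self_of_unit (hunit p)
  have hxn : ⟪F p, ν p⟫ = 0 := inner_T_N F p (hNν p) (memT_x F p)
  have hxuc : ⟪F p, fderiv ℝ F p c⟫ = 0 := inner_F_fderiv hF hunit p c
  have hder : fderiv ℝ (fun q => cross7 (F q) (ν q)) p c
      = cross7 (fderiv ℝ F p c) (ν p) + cross7 (F p) (fderiv ℝ ν p c) :=
    fderiv_cross7_comp hdF hdν c
  rw [covT, covT, hder]
  conv_rhs => rw [← PN_J hholo, covT_J_alg hxx hxn hxuc,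
    PN_add, PN_smul, PN_of_memT (memT_x F p), smul_zero, add_zero]

lemma DSigC_J (hF : ContDiff ℝ (⊤ : ℕ∞) F) (hunit : ∀ p, ‖F p‖ = 1)
    (hholo : ∀ p c, fderiv ℝ F p (j0 c) = cross7 (F p) (fderiv ℝ F p c))
    (hν : ContDiff ℝ (⊤ : ℕ∞) ν) (hNν : ∀ p, ν p ∈ Nsp F p) (p : Pt) :
    DSigC F (fun q => cross7 (F q) (ν q)) p = - cross7 (F p) (DSigC F ν p) := by
  have key : ∀ c : Pt, fderiv ℝ F p c ∈ TanSpan F p →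
      cross7 (fderiv ℝ F p c) (cross7 (F p) (covT F ν p c))
        = - cross7 (F p) (cross7 (fderiv ℝ F p c) (covT F ν p c)) := by
    intro c hc
    have hη : covT F ν p c ∈ Nsp F p := PN_mem _
    exact triple_cross (inner_F_fderiv hF hunit p c)
      (inner_T_N F p hη (memT_x F p)) (inner_T_N F p hη hc)
  have hcov := covT_J hF hunit hholo hν hNν p
  rw [DSigC, DSigC, hcov (1, 0), hcov (0, 1),
    key (1, 0) (memT_u1 F p), key (0, 1) (memT_u2 F p),
    cross7_smul_right, cross7_add_right]
  module

lemma covT_neg (p c : Pt) :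
    covT F (fun q => -(ν q)) p c = - covT F ν p c := by
  rw [covT, covT, fderiv_fun_neg, ← PN_neg]
  apply congrArg
  rw [ContinuousLinearMap.neg_apply, cross7_neg_right, cross7_neg_right]
  module

lemma DSigC_neg (p : Pt) :
    DSigC F (fun q => -(ν q)) p = - DSigC F ν p := by
  rw [DSigC, DSigC, covT_neg, covT_neg, cross7_neg_right, cross7_neg_right]
  module

end Dirac

/-- Let Σ be a closed J-holomorphic curve in S⁶ (parametrized by a holomorphic conformal
chart F).  The Dirac operator 𝐃_Σ is J-antilinear: 𝐃_Σ(Jν) = −J 𝐃_Σ ν for every normal field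
ν.  Consequently, for the homogeneous kernels V_λ = {ν : 𝐃_Σν = −(λ+1)Jν} of the cone C over
Σ, the symmetry J V_{−1+λ} = V_{−1−λ} holds, and in particular d_{−1+λ} = d_{−1−λ}. -/
theorem statement8 (F : Pt → E7)
    (hF : ContDiff ℝ (⊤ : ℕ∞) F)
    (hunit : ∀ p, ‖F p‖ = 1)
    (hholo : ∀ p c, fderiv ℝ F p (j0 c) = cross7 (F p) (fderiv ℝ F p c))
    (himm : ∀ p, fderiv ℝ F p (1, 0) ≠ 0) :
    (∀ ν : Pt → E7, ContDiff ℝ (⊤ : ℕ∞) ν → (∀ p, ν p ∈ Nsp F p) →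
        ∀ p, DSigC F (fun q => cross7 (F q) (ν q)) p = - cross7 (F p) (DSigC F ν p)) ∧
      (∀ l : ℝ,
        (fun ν : Pt → E7 => fun q => cross7 (F q) (ν q)) '' Vset F (-1 + l)
          = Vset F (-1 - l)) ∧
      (∀ l : ℝ, Nonempty (↥(Vset F (-1 + l)) ≃ ↥(Vset F (-1 - l)))) := by
  -- The map J on sections
  have hJJ : ∀ (ν : Pt → E7), (∀ p, ν p ∈ Nsp F p) →
      ∀ q, cross7 (F q) (cross7 (F q) (ν q)) = -(ν q) := by
    intro ν hN q
    exact double_cross (inner_self_of_unit (hunit q)) (inner_T_N F q (hN q) (memT_x F q))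
  -- the forward mapping property, for an arbitrary eigenvalue parameter
  have fwd : ∀ l : ℝ, ∀ ν ∈ Vset F (-1 + l),
      (fun q => cross7 (F q) (ν q)) ∈ Vset F (-1 - l) := by
    intro l ν hν
    obtain ⟨hsm, hN, heig⟩ := hν
    refine ⟨contDiff_cross7_comp hF hsm, fun p => J_norm hholo (hN p), fun p => ?_⟩
    have hb : (fun q => cross7 (F q) (ν q)) p = cross7 (F p) (ν p) := rfl
    rw [DSigC_J hF hunit hholo hsm hN p, heig p, cross7_smul_right, hb, hJJ ν hN p]
    module
  -- negation stays in Vset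
  have negmem : ∀ l : ℝ, ∀ ν ∈ Vset F l, (fun q => -(ν q)) ∈ Vset F l := by
    rintro l ν ⟨hsm, hN, heig⟩
    refine ⟨hsm.neg, fun p => Submodule.neg_mem _ (hN p), fun p => ?_⟩
    have hb : (fun q => -(ν q)) p = -(ν p) := rfl
    rw [DSigC_neg, heig p, hb, cross7_neg_right]
    module
  -- part 1
  have part1 : ∀ ν : Pt → E7, ContDiff ℝ (⊤ : ℕ∞) ν → (∀ p, ν p ∈ Nsp F p) →
      ∀ p, DSigC F (fun q => cross7 (F q) (ν q)) p = - cross7 (F p) (DSigC F ν p) :=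
    fun ν hsm hN p => DSigC_J hF hunit hholo hsm hN p
  -- part 2
  have part2 : ∀ l : ℝ,
      (fun ν : Pt → E7 => fun q => cross7 (F q) (ν q)) '' Vset F (-1 + l)
        = Vset F (-1 - l) := by
    intro l
    apply Set.Subset.antisymm
    · rintro μ ⟨ν, hν, rfl⟩
      exact fwd l ν hν
    · intro μ hμ
      have hμ' : μ ∈ Vset F (-1 + (-l)) := by
        have h : (-1 - l : ℝ) = -1 + (-l) := by ring
        rw [← h]; exact hμ
      have h1 : (fun q => cross7 (F q) (μ q)) ∈ Vset F (-1 - (-l)) := fwd (-l) μ hμ'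
      have h2 : (fun q => cross7 (F q) (μ q)) ∈ Vset F (-1 + l) := by
        have h : (-1 - (-l) : ℝ) = -1 + l := by ring
        rw [← h]; exact h1
      have h3 : (fun q => -(cross7 (F q) (μ q))) ∈ Vset F (-1 + l) :=
        negmem _ _ h2
      refine ⟨fun q => -(cross7 (F q) (μ q)), h3, ?_⟩
      funext q
      show cross7 (F q) (-(cross7 (F q) (μ q))) = μ q
      rw [cross7_neg_right, hJJ μ hμ.2.1 q, neg_neg]
  refine ⟨part1, part2, ?_⟩
  -- part 3
  intro l
  refine ⟨Equiv.ofBijective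
    (fun ν => ⟨fun q => cross7 (F q) (ν.1 q), (part2 l) ▸ Set.mem_image_of_mem _ ν.2⟩)
    ⟨?_, ?_⟩⟩
  · rintro ⟨ν, hν⟩ ⟨ν', hν'⟩ h
    have h' := congrArg Subtype.val h
    apply Subtype.ext
    funext q
    have hq : cross7 (F q) (ν q) = cross7 (F q) (ν' q) := congrFun h' q
    have h1 := congrArg (cross7 (F q)) hq
    rw [hJJ ν hν.2.1 q, hJJ ν' hν'.2.1 q] at h1
    exact neg_injective h1
  · rintro ⟨μ, hμ⟩
    have := (part2 l).symm ▸ hμ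
    obtain ⟨ν, hν, hνμ⟩ := this
    exact ⟨⟨ν, hν⟩, Subtype.ext hνμ⟩
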